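/- (Theorem 2, quantitative form) Let γ > 0, let Θ ⊆ ℝ^d be open, let {p_θ : θ ∈ Θ} be probability densities on ℝ^k, let p₀ = p_{θ₀} for some θ₀ ∈ Θ, let w be a probability density, let c₀ ∈ (0,1], and set p = c₀p₀ + (1−c₀)w. For ξ = (c,θ) ∈ (0,1]×Θ define f₀(ξ) = S_power(c₀p₀, c·p_θ) and f₁(ξ) = S_power(p, c·p_θ), so that f₁(ξ) = f₀(ξ) − (1+γ)(1−c₀)c^γ ε_θ with ε_θ = ∫w p_θ^γ. Let ξ₁ = (c₁,θ₁) be a minimizer of f₁ over (0,1]×Θ and ε₁ = ε_{θ₁}, and let ξ₀ = (c₀,θ₀), which minimizes f₀ over (0,1]×Θ. Let N be a convex set containing {ξ ∈ (0,1]×Θ : f₁(ξ) ≤ f₁(ξ₁) + (1+γ)ε₁}, suppose f₀ is twice differentiable on N, and suppose there is δ > 0 such that every eigenvalue of the Hessian of f₀ at every point of N is greater than δ. Then ξ₀, ξ₁ ∈ N and ‖ξ₁ − ξ₀‖ ≤ √(2(1+γ)ε₁/δ). -/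

import Mathlib

open MeasureTheory

/-- (Theorem 2, quantitative form) Let `f₀(ξ) = S_power(c₀p₀, c·p_θ)` and
`f₁(ξ) = S_power(p, c·p_θ) = f₀(ξ) − (1+γ)(1−c₀)c^γ ε_θ` with `ε_θ = ∫ w p_θ^γ`, let
`ξ₁ = (c₁,θ₁)` minimize `f₁` over `(0,1]×Θ` and `ξ₀ = (c₀,θ₀)` minimize `f₀`. If `N` is a
convex set containing the sublevel set `{ξ : f₁(ξ) ≤ f₁(ξ₁) + (1+γ)ε₁}`, `f₀` is twice
differentiable on `N` and the Hessian of `f₀` has all eigenvalues greater than `δ > 0`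
on `N`, then `ξ₀, ξ₁ ∈ N` and `‖ξ₁ − ξ₀‖ ≤ √(2(1+γ)ε₁/δ)`. -/
theorem enlarged_model_bias_bound
    {k d : ℕ} (γ : ℝ) (hγ : 0 < γ)
    (Θ : Set (Fin d → ℝ)) (hΘ : IsOpen Θ)
    (p : (Fin d → ℝ) → (Fin k → ℝ) → ℝ)
    (hpm : ∀ θ, Measurable (p θ)) (hp0 : ∀ θ x, 0 ≤ p θ x)
    (hpi : ∀ θ ∈ Θ, Integrable (p θ)) (hp1 : ∀ θ ∈ Θ, (∫ x, p θ x) = 1)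
    (θ₀ : Fin d → ℝ) (hθ₀ : θ₀ ∈ Θ)
    (w : (Fin k → ℝ) → ℝ) (hwm : Measurable w) (hw0 : ∀ x, 0 ≤ w x)
    (hwi : Integrable w) (hw1 : (∫ x, w x) = 1)
    (c₀ : ℝ) (hc₀ : c₀ ∈ Set.Ioc (0 : ℝ) 1)
    (hpint : ∀ θ ∈ Θ, Integrable (fun x => p θ x ^ (1 + γ)))
    (hp₀pint : ∀ θ ∈ Θ, Integrable (fun x => p θ₀ x * p θ x ^ γ))
    (hwpint : ∀ θ ∈ Θ, Integrable (fun x => w x * p θ x ^ γ))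
    (ε : (Fin d → ℝ) → ℝ) (hε : ∀ θ, ε θ = ∫ x, w x * p θ x ^ γ)
    (f₀ f₁ : ℝ × (Fin d → ℝ) → ℝ)
    (hf₀ : ∀ c θ, f₀ (c, θ) =
      γ * (∫ x, (c * p θ x) ^ (1 + γ)) -
        (1 + γ) * (∫ x, (c₀ * p θ₀ x) * (c * p θ x) ^ γ))
    (hf₁ : ∀ c θ, f₁ (c, θ) = f₀ (c, θ) - (1 + γ) * (1 - c₀) * c ^ γ * ε θ)
    (c₁ : ℝ) (θ₁ : Fin d → ℝ) (hc₁ : c₁ ∈ Set.Ioc (0 : ℝ) 1) (hθ₁ : θ₁ ∈ Θ)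
    (hmin1 : ∀ ξ ∈ (Set.Ioc (0 : ℝ) 1) ×ˢ Θ, f₁ (c₁, θ₁) ≤ f₁ ξ)
    (hmin0 : ∀ ξ ∈ (Set.Ioc (0 : ℝ) 1) ×ˢ Θ, f₀ (c₀, θ₀) ≤ f₀ ξ)
    (N : Set (ℝ × (Fin d → ℝ))) (hNconv : Convex ℝ N)
    (hNsub : {ξ ∈ (Set.Ioc (0 : ℝ) 1) ×ˢ Θ | f₁ ξ ≤ f₁ (c₁, θ₁) + (1 + γ) * ε θ₁} ⊆ N)
    (hdiff : ContDiffOn ℝ 2 f₀ N)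
    (δ : ℝ) (hδ : 0 < δ)
    (hHess : ∀ ξ ∈ N, ∀ v : ℝ × (Fin d → ℝ),
      δ * ‖v‖ ^ 2 ≤ fderiv ℝ (fderiv ℝ f₀) ξ v v) :
    (c₀, θ₀) ∈ N ∧ (c₁, θ₁) ∈ N ∧
      ‖(c₁, θ₁) - (c₀, θ₀)‖ ≤ Real.sqrt (2 * (1 + γ) * ε θ₁ / δ) := by
  obtain ⟨hc₀0, hc₀1⟩ := hc₀
  obtain ⟨hc₁0, hc₁1⟩ := hc₁
  have hεnn : ∀ θ, 0 ≤ ε θ := fun θ => by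
    rw [hε θ]
    exact integral_nonneg fun x => mul_nonneg (hw0 x) (Real.rpow_nonneg (hp0 θ x) γ)
  have hγ1 : (0 : ℝ) < 1 + γ := by linarith
  have hε1 : 0 ≤ (1 + γ) * ε θ₁ := mul_nonneg hγ1.le (hεnn θ₁)
  have hξ₁prod : ((c₁, θ₁) : ℝ × (Fin d → ℝ)) ∈ (Set.Ioc (0 : ℝ) 1) ×ˢ Θ :=
    ⟨⟨hc₁0, hc₁1⟩, hθ₁⟩
  have hξ₀prod : ((c₀, θ₀) : ℝ × (Fin d → ℝ)) ∈ (Set.Ioc (0 : ℝ) 1) ×ˢ Θ :=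
    ⟨⟨hc₀0, hc₀1⟩, hθ₀⟩
  have hN1 : ((c₁, θ₁) : ℝ × (Fin d → ℝ)) ∈ N := hNsub ⟨hξ₁prod, by linarith⟩
  have hc₁γ : c₁ ^ γ ≤ 1 := Real.rpow_le_one hc₁0.le hc₁1 hγ.le
  have hc₁γ0 : 0 ≤ c₁ ^ γ := Real.rpow_nonneg hc₁0.le γ
  have hc₀γ0 : 0 ≤ c₀ ^ γ := Real.rpow_nonneg hc₀0.le γ
  have h1c₀ : 0 ≤ 1 - c₀ := by linarith
  have key0 : 0 ≤ (1 + γ) * (1 - c₀) * c₀ ^ γ * ε θ₀ :=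
    mul_nonneg (mul_nonneg (mul_nonneg hγ1.le h1c₀) hc₀γ0) (hεnn θ₀)
  have hAB : (1 - c₀) * c₁ ^ γ ≤ 1 := mul_le_one₀ (by linarith) hc₁γ0 hc₁γ
  have hAB0 : 0 ≤ (1 - c₀) * c₁ ^ γ := mul_nonneg h1c₀ hc₁γ0
  have key1 : (1 + γ) * (1 - c₀) * c₁ ^ γ * ε θ₁ ≤ (1 + γ) * ε θ₁ := by
    calc (1 + γ) * (1 - c₀) * c₁ ^ γ * ε θ₁
        = ((1 - c₀) * c₁ ^ γ) * ((1 + γ) * ε θ₁) := by ring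
      _ ≤ 1 * ((1 + γ) * ε θ₁) := mul_le_mul_of_nonneg_right hAB hε1
      _ = (1 + γ) * ε θ₁ := one_mul _
  have hf₁₀ := hf₁ c₀ θ₀
  have hf₁₁ := hf₁ c₁ θ₁
  have hmin0₁ := hmin0 _ hξ₁prod
  have hmin1₀ := hmin1 _ hξ₀prod
  have hN0 : ((c₀, θ₀) : ℝ × (Fin d → ℝ)) ∈ N := hNsub ⟨hξ₀prod, by linarith⟩
  have hgap : f₀ (c₁, θ₁) ≤ f₀ (c₀, θ₀) + (1 + γ) * ε θ₁ := by linarith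
  refine ⟨hN0, hN1, ?_⟩
  set ξ₀ : ℝ × (Fin d → ℝ) := (c₀, θ₀) with hξ₀def
  set ξ₁ : ℝ × (Fin d → ℝ) := (c₁, θ₁) with hξ₁def
  by_cases hv0 : ξ₁ - ξ₀ = 0
  · rw [hv0, norm_zero]; exact Real.sqrt_nonneg _
  set v : ℝ × (Fin d → ℝ) := ξ₁ - ξ₀ with hv
  have hvn : 0 < ‖v‖ := norm_pos_iff.mpr hv0
  set K : ℝ := δ * ‖v‖ ^ 2 with hK
  have hKpos : 0 < K := mul_pos hδ (pow_pos hvn 2)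
  set xt : ℝ → ℝ × (Fin d → ℝ) := fun t => ξ₀ + t • v with hxdef
  have hx0 : xt 0 = ξ₀ := by simp [hxdef]
  have hx1 : xt 1 = ξ₁ := by
    show ξ₀ + (1 : ℝ) • (ξ₁ - ξ₀) = ξ₁
    rw [one_smul]; abel
  have hxN : ∀ t ∈ Set.Icc (0 : ℝ) 1, xt t ∈ N := fun t ht =>
    hNconv.add_smul_sub_mem hN0 hN1 ht
  have hxderiv : ∀ t : ℝ, HasDerivAt xt v t := fun t => by
    have h := ((hasDerivAt_id t).smul_const v).const_add ξ₀
    simp only [one_smul] at h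
    exact h
  set G := fderiv ℝ f₀ with hG
  have hGdiff : ∀ ξ ∈ N, DifferentiableAt ℝ G ξ := by
    intro ξ hξ
    by_contra h
    have h0 : fderiv ℝ G ξ = 0 := fderiv_zero_of_not_differentiableAt h
    have h2 := hHess ξ hξ v
    rw [h0] at h2
    simp only [ContinuousLinearMap.zero_apply] at h2
    exact absurd h2 (not_le.mpr hKpos)
  set φ : ℝ → ℝ := fun t => G (xt t) v with hφdef
  have hφderiv : ∀ t ∈ Set.Icc (0 : ℝ) 1, HasDerivAt φ (fderiv ℝ G (xt t) v v) t := by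
    intro t ht
    have h1 : HasDerivAt (fun s => G (xt s)) (fderiv ℝ G (xt t) v) t :=
      ((hGdiff _ (hxN t ht)).hasFDerivAt).comp_hasDerivAt t (hxderiv t)
    have h2 := h1.clm_apply (hasDerivAt_const t v)
    simpa using h2
  have hHessK : ∀ t ∈ Set.Icc (0 : ℝ) 1, K ≤ fderiv ℝ G (xt t) v v := fun t ht =>
    hHess _ (hxN t ht) v
  have hφcont : ContinuousOn φ (Set.Icc 0 1) := fun t ht =>
    ((hφderiv t ht).continuousAt).continuousWithinAt
  have hφmono : StrictMonoOn φ (Set.Icc (0 : ℝ) 1) := by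
    apply strictMonoOn_of_deriv_pos (convex_Icc 0 1) hφcont
    intro t ht
    rw [interior_Icc] at ht
    rw [(hφderiv t (Set.mem_Icc_of_Ioo ht)).deriv]
    exact lt_of_lt_of_le hKpos (hHessK t (Set.mem_Icc_of_Ioo ht))
  have hlin : ∀ (a : ℝ) (s : ℝ), HasDerivAt (fun u : ℝ => a * u) a s := fun a s => by
    simpa using (hasDerivAt_id s).const_mul a
  have hφlb : ∀ t ∈ Set.Icc (0 : ℝ) 1, φ 0 + K * t ≤ φ t := by
    intro t ht
    set χ : ℝ → ℝ := fun s => φ s - K * s with hχdef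
    have hχmono : MonotoneOn χ (Set.Icc 0 1) := by
      apply monotoneOn_of_deriv_nonneg (convex_Icc 0 1)
      · exact hφcont.sub ((continuous_const.mul continuous_id).continuousOn)
      · intro s hs
        rw [interior_Icc] at hs
        exact ((hφderiv s (Set.mem_Icc_of_Ioo hs)).sub (hlin K s)).differentiableAt.differentiableWithinAt
      · intro s hs
        rw [interior_Icc] at hs
        show 0 ≤ deriv (φ - fun u => K * u) s
        rw [((hφderiv s (Set.mem_Icc_of_Ioo hs)).sub (hlin K s)).deriv]
        have := hHessK s (Set.mem_Icc_of_Ioo hs)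
        linarith
    have h := hχmono (Set.left_mem_Icc.mpr zero_le_one) ht ht.1
    simp only [hχdef, mul_zero, sub_zero] at h
    linarith
  set g : ℝ → ℝ := fun t => f₀ (xt t) with hgdef
  have hxtcont : Continuous xt := continuous_const.add (continuous_id.smul continuous_const)
  have hgcont : ContinuousOn g (Set.Icc 0 1) :=
    hdiff.continuousOn.comp hxtcont.continuousOn fun t ht => hxN t ht
  have hgderiv : ∀ t ∈ Set.Icc (0 : ℝ) 1, G (xt t) ≠ 0 → HasDerivAt g (φ t) t := by
    intro t ht hne
    have hdf : DifferentiableAt ℝ f₀ (xt t) := by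
      by_contra h
      exact hne (by rw [hG]; exact fderiv_zero_of_not_differentiableAt h)
    have := hdf.hasFDerivAt.comp_hasDerivAt t (hxderiv t)
    rw [← hG] at this
    exact this
  have hφ0 : 0 ≤ φ 0 := by
    by_cases h0 : G ξ₀ = 0
    · simp [hφdef, hx0, h0]
    · have hg0 : HasDerivAt g (φ 0) 0 :=
        hgderiv 0 ⟨le_refl 0, zero_le_one⟩ (by rw [hx0]; exact h0)
      have hslope := hasDerivAt_iff_tendsto_slope.mp hg0
      have hmono : nhdsWithin (0 : ℝ) (Set.Ioi 0) ≤ nhdsWithin (0 : ℝ) {0}ᶜ :=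
        nhdsWithin_mono 0 fun y hy => ne_of_gt hy
      refine ge_of_tendsto (hslope.mono_left hmono) ?_
      have htend : Filter.Tendsto (fun t : ℝ => θ₀ + t • (θ₁ - θ₀)) (nhds 0) (nhds θ₀) := by
        have hc : Continuous fun t : ℝ => θ₀ + t • (θ₁ - θ₀) :=
          continuous_const.add (continuous_id.smul continuous_const)
        simpa using hc.tendsto 0
      have hev2 : ∀ᶠ t in nhds (0 : ℝ), θ₀ + t • (θ₁ - θ₀) ∈ Θ :=
        htend (hΘ.mem_nhds hθ₀)
      have hev1 : Set.Ioc (0 : ℝ) 1 ∈ nhdsWithin (0 : ℝ) (Set.Ioi 0) :=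
        Ioc_mem_nhdsGT_of_mem ⟨le_refl 0, zero_lt_one⟩
      filter_upwards [hev1, hev2.filter_mono nhdsWithin_le_nhds] with t ht1 ht2
      have hfst : (xt t).1 = (1 - t) * c₀ + t * c₁ := by
        simp [hxdef, hv, hξ₀def, hξ₁def, smul_eq_mul]
        ring
      have hsnd : (xt t).2 = θ₀ + t • (θ₁ - θ₀) := by
        simp [hxdef, hv, hξ₀def, hξ₁def]
      have hxt : xt t ∈ (Set.Ioc (0 : ℝ) 1) ×ˢ Θ := by
        refine Set.mem_prod.mpr ⟨?_, ?_⟩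
        · rw [hfst]
          exact (convex_Ioc (0 : ℝ) 1) ⟨hc₀0, hc₀1⟩ ⟨hc₁0, hc₁1⟩
            (by linarith [ht1.2]) ht1.1.le (by ring)
        · rw [hsnd]; exact ht2
      have hge : g 0 ≤ g t := by
        have h := hmin0 _ hxt
        simp only [hgdef]
        rw [hx0]
        exact h
      show 0 ≤ slope g 0 t
      rw [slope_def_field]
      exact div_nonneg (by linarith) (by simpa using ht1.1.le)
  have hbad : ∀ s ∈ Set.Icc (0 : ℝ) 1, ∀ t ∈ Set.Icc (0 : ℝ) 1,
      G (xt s) = 0 → G (xt t) = 0 → s = t := by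
    intro s hs t ht h1 h2
    by_contra hne
    have hφs : φ s = 0 := by simp [hφdef, h1]
    have hφt : φ t = 0 := by simp [hφdef, h2]
    rcases lt_or_gt_of_ne hne with h | h
    · have := hφmono hs ht h
      rw [hφs, hφt] at this
      exact lt_irrefl 0 this
    · have := hφmono ht hs h
      rw [hφs, hφt] at this
      exact lt_irrefl 0 this
  set ψ : ℝ → ℝ := fun t => g t - φ 0 * t - K / 2 * t ^ 2 with hψdef
  have hψcont : ContinuousOn ψ (Set.Icc 0 1) :=
    (hgcont.sub ((continuous_const.mul continuous_id).continuousOn)).sub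
      ((continuous_const.mul (continuous_pow 2)).continuousOn)
  have hψderiv : ∀ t ∈ Set.Icc (0 : ℝ) 1, G (xt t) ≠ 0 →
      HasDerivAt ψ (φ t - φ 0 - K * t) t := by
    intro t ht hne
    have h1 := hgderiv t ht hne
    have h2 : HasDerivAt (fun s : ℝ => φ 0 * s) (φ 0) t := hlin (φ 0) t
    have h3 : HasDerivAt (fun s : ℝ => K / 2 * s ^ 2) (K * t) t := by
      have h := (hasDerivAt_pow 2 t).const_mul (K / 2)
      exact h.congr_deriv (by rw [show (2:ℕ) - 1 = 1 from rfl]; ring)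
    exact (h1.sub h2).sub h3
  have hmonoOn : ∀ a b : ℝ, 0 ≤ a → b ≤ 1 →
      (∀ s ∈ Set.Ioo a b, G (xt s) ≠ 0) → a ≤ b → ψ a ≤ ψ b := by
    intro a b ha hb hgood hab
    have hsub : Set.Icc a b ⊆ Set.Icc 0 1 := Set.Icc_subset_Icc ha hb
    have hmem : ∀ s ∈ Set.Ioo a b, s ∈ Set.Icc (0 : ℝ) 1 := fun s hs =>
      hsub (Set.mem_Icc_of_Ioo hs)
    have hm : MonotoneOn ψ (Set.Icc a b) := by
      apply monotoneOn_of_deriv_nonneg (convex_Icc a b) (hψcont.mono hsub)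
      · intro s hs
        rw [interior_Icc] at hs
        exact (hψderiv s (hmem s hs) (hgood s hs)).differentiableAt.differentiableWithinAt
      · intro s hs
        rw [interior_Icc] at hs
        rw [(hψderiv s (hmem s hs) (hgood s hs)).deriv]
        have := hφlb s (hmem s hs)
        linarith
    exact hm (Set.left_mem_Icc.mpr hab) (Set.right_mem_Icc.mpr hab) hab
  have hψ01 : ψ 0 ≤ ψ 1 := by
    by_cases hb : ∃ t ∈ Set.Icc (0 : ℝ) 1, G (xt t) = 0
    · obtain ⟨u, hu, hu0⟩ := hb
      have h1 : ψ 0 ≤ ψ u := by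
        refine hmonoOn 0 u (le_refl 0) hu.2 ?_ hu.1
        intro s hs h
        have hsIcc : s ∈ Set.Icc (0 : ℝ) 1 := ⟨hs.1.le, hs.2.le.trans hu.2⟩
        exact absurd (hbad s hsIcc u hu h hu0) (ne_of_lt hs.2)
      have h2 : ψ u ≤ ψ 1 := by
        refine hmonoOn u 1 hu.1 (le_refl 1) ?_ hu.2
        intro s hs h
        have hsIcc : s ∈ Set.Icc (0 : ℝ) 1 := ⟨hu.1.trans hs.1.le, hs.2.le⟩
        exact absurd (hbad s hsIcc u hu h hu0) (ne_of_gt hs.1)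
      linarith
    · push_neg at hb
      exact hmonoOn 0 1 (le_refl 0) (le_refl 1)
        (fun s hs => hb s (Set.mem_Icc_of_Ioo hs)) zero_le_one
  have hg0v : g 0 = f₀ ξ₀ := by simp only [hgdef]; rw [hx0]
  have hg1v : g 1 = f₀ ξ₁ := by simp only [hgdef]; rw [hx1]
  have hψ0v : ψ 0 = g 0 := by simp [hψdef]
  have hψ1v : ψ 1 = g 1 - φ 0 - K / 2 := by simp [hψdef]
  have hfinal : K / 2 ≤ (1 + γ) * ε θ₁ := by
    rw [hψ0v, hψ1v, hg0v, hg1v] at hψ01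
    have : f₀ ξ₁ ≤ f₀ ξ₀ + (1 + γ) * ε θ₁ := hgap
    linarith
  have hsq : ‖v‖ ^ 2 ≤ 2 * (1 + γ) * ε θ₁ / δ := by
    rw [le_div_iff₀ hδ]
    rw [hK] at hfinal
    nlinarith
  exact Real.le_sqrt_of_sq_le hsq
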